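/- For every finite field F with char F ≠ 2, there is no bijective map Φ : M_3(F) → M_3(F) satisfying per A = det Φ(A) for all A ∈ M_3(F). -/

import Mathlib

open Finset Matrix

namespace PerDetAux

lemma vec_ext {α : Type*} {x y : Fin 3 → α} (h0 : x 0 = y 0) (h1 : x 1 = y 1)
    (h2 : x 2 = y 2) : x = y := by
  funext i
  fin_cases i <;> assumption

section Field
variable {F : Type} [Field F]

/-- permanental cross product -/
def pcr (a b : Fin 3 → F) : Fin 3 → F :=
  ![a 1 * b 2 + a 2 * b 1, a 0 * b 2 + a 2 * b 0, a 0 * b 1 + a 1 * b 0]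

/-- determinantal cross product -/
def dcr (a b : Fin 3 → F) : Fin 3 → F :=
  ![a 1 * b 2 - a 2 * b 1, a 2 * b 0 - a 0 * b 2, a 0 * b 1 - a 1 * b 0]

lemma permanent_fin_three (A : Matrix (Fin 3) (Fin 3) F) :
    A.permanent = A 0 0 * A 1 1 * A 2 2 + A 0 0 * A 2 1 * A 1 2 + A 1 0 * A 0 1 * A 2 2
      + A 1 0 * A 2 1 * A 0 2 + A 2 0 * A 0 1 * A 1 2 + A 2 0 * A 1 1 * A 0 2 := by
  have huniv : (Finset.univ : Finset (Equiv.Perm (Fin 3))) =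
      {1, Equiv.swap 0 1, Equiv.swap 0 2, Equiv.swap 1 2,
        Equiv.swap 0 1 * Equiv.swap 1 2, Equiv.swap 1 2 * Equiv.swap 0 1} := by decide
  rw [Matrix.permanent, huniv]
  rw [Finset.sum_insert (by decide), Finset.sum_insert (by decide),
    Finset.sum_insert (by decide), Finset.sum_insert (by decide),
    Finset.sum_insert (by decide), Finset.sum_singleton]
  simp only [Fin.prod_univ_three]
  norm_num [Equiv.swap_apply_def, Fin.ext_iff]
  ring

lemma permanent_eq_dot (A : Matrix (Fin 3) (Fin 3) F) :
    A.permanent = A 2 ⬝ᵥ pcr (A 0) (A 1) := by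
  rw [permanent_fin_three]
  simp [pcr, dotProduct, Fin.sum_univ_three]
  ring

lemma det_eq_dot (A : Matrix (Fin 3) (Fin 3) F) :
    A.det = A 2 ⬝ᵥ dcr (A 0) (A 1) := by
  rw [Matrix.det_fin_three]
  simp [dcr, dotProduct, Fin.sum_univ_three]
  ring

lemma pcr_zero (b : Fin 3 → F) : pcr (0 : Fin 3 → F) b = 0 := by
  refine vec_ext ?_ ?_ ?_ <;> simp [pcr]

lemma dcr_zero (b : Fin 3 → F) : dcr (0 : Fin 3 → F) b = 0 := by
  refine vec_ext ?_ ?_ ?_ <;> simp [dcr]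

lemma dcr_line (a : Fin 3 → F) (ha : a ≠ 0) (b : Fin 3 → F) :
    dcr a b = 0 ↔ ∃ c : F, c • a = b := by
  constructor
  · intro h
    have e0 : a 1 * b 2 - a 2 * b 1 = 0 := congrFun h 0
    have e1 : a 2 * b 0 - a 0 * b 2 = 0 := congrFun h 1
    have e2 : a 0 * b 1 - a 1 * b 0 = 0 := congrFun h 2
    by_cases h0 : a 0 ≠ 0
    · refine ⟨b 0 / a 0, vec_ext ?_ ?_ ?_⟩ <;> simp only [Pi.smul_apply, smul_eq_mul]
      · field_simp
      · field_simp; linear_combination -e2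
      · field_simp; linear_combination e1
    push_neg at h0
    by_cases h1 : a 1 ≠ 0
    · refine ⟨b 1 / a 1, vec_ext ?_ ?_ ?_⟩ <;> simp only [Pi.smul_apply, smul_eq_mul]
      · field_simp; linear_combination e2
      · field_simp
      · field_simp; linear_combination -e0
    push_neg at h1
    have h2 : a 2 ≠ 0 := by
      intro h2
      exact ha (vec_ext h0 h1 h2)
    refine ⟨b 2 / a 2, vec_ext ?_ ?_ ?_⟩ <;> simp only [Pi.smul_apply, smul_eq_mul]
    · field_simp; linear_combination -e1
    · field_simp; linear_combination e0
    · field_simp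
  · rintro ⟨c, rfl⟩
    refine vec_ext ?_ ?_ ?_ <;> simp [dcr] <;> ring

lemma pcr_all_ne (h2 : (2 : F) ≠ 0) (a : Fin 3 → F) (hall : ∀ i, a i ≠ 0) (b : Fin 3 → F) :
    pcr a b = 0 ↔ b = 0 := by
  constructor
  · intro h
    have e0 : a 1 * b 2 + a 2 * b 1 = 0 := congrFun h 0
    have e1 : a 0 * b 2 + a 2 * b 0 = 0 := congrFun h 1
    have e2 : a 0 * b 1 + a 1 * b 0 = 0 := congrFun h 2
    have key : 2 * a 1 * a 2 * b 0 = 0 := by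
      linear_combination a 1 * e1 + a 2 * e2 - a 0 * e0
    have hb0 : b 0 = 0 := by
      rcases mul_eq_zero.mp key with h | h
      · rcases mul_eq_zero.mp h with h' | h'
        · rcases mul_eq_zero.mp h' with h'' | h''
          · exact absurd h'' h2
          · exact absurd h'' (hall 1)
        · exact absurd h' (hall 2)
      · exact h
    have hb1 : b 1 = 0 := by
      rw [hb0, mul_zero, add_zero] at e2
      rcases mul_eq_zero.mp e2 with h' | h'
      · exact absurd h' (hall 0)
      · exact h'
    have hb2 : b 2 = 0 := by
      rw [hb0, mul_zero, add_zero] at e1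
      rcases mul_eq_zero.mp e1 with h' | h'
      · exact absurd h' (hall 0)
      · exact h'
    exact vec_ext hb0 hb1 hb2
  · rintro rfl
    refine vec_ext ?_ ?_ ?_ <;> simp [pcr]

lemma pcr_line (a : Fin 3 → F) (ha : a ≠ 0) (hz : ∃ i, a i = 0) :
    ∃ w : Fin 3 → F, w ≠ 0 ∧ ∀ b, (pcr a b = 0 ↔ ∃ c : F, c • w = b) := by
  by_cases h0 : a 0 = 0
  · by_cases h1 : a 1 = 0
    · -- a 0 = 0, a 1 = 0, a 2 ≠ 0
      have h2 : a 2 ≠ 0 := fun h2 => ha (vec_ext h0 h1 h2)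
      refine ⟨![0, 0, 1], fun hw => one_ne_zero (α := F) (congrFun hw 2), fun b => ?_⟩
      constructor
      · intro h
        have e0 : a 1 * b 2 + a 2 * b 1 = 0 := congrFun h 0
        have e1 : a 0 * b 2 + a 2 * b 0 = 0 := congrFun h 1
        rw [h1, zero_mul, zero_add] at e0
        rw [h0, zero_mul, zero_add] at e1
        have hb1 : b 1 = 0 := (mul_eq_zero.mp e0).resolve_left h2
        have hb0 : b 0 = 0 := (mul_eq_zero.mp e1).resolve_left h2
        exact ⟨b 2, vec_ext (by simpa using hb0.symm) (by simpa using hb1.symm) (by simp)⟩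
      · rintro ⟨c, rfl⟩
        refine vec_ext ?_ ?_ ?_ <;> simp [pcr, h0, h1]
    · by_cases h2 : a 2 = 0
      · -- a 0 = 0, a 2 = 0, a 1 ≠ 0
        refine ⟨![0, 1, 0], fun hw => one_ne_zero (α := F) (congrFun hw 1), fun b => ?_⟩
        constructor
        · intro h
          have e0 : a 1 * b 2 + a 2 * b 1 = 0 := congrFun h 0
          have e2 : a 0 * b 1 + a 1 * b 0 = 0 := congrFun h 2
          rw [h2, zero_mul, add_zero] at e0
          rw [h0, zero_mul, zero_add] at e2
          have hb2 : b 2 = 0 := (mul_eq_zero.mp e0).resolve_left h1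
          have hb0 : b 0 = 0 := (mul_eq_zero.mp e2).resolve_left h1
          exact ⟨b 1, vec_ext (by simpa using hb0.symm) (by simp) (by simpa using hb2.symm)⟩
        · rintro ⟨c, rfl⟩
          refine vec_ext ?_ ?_ ?_ <;> simp [pcr, h0, h2]
      · -- a 0 = 0, a 1 ≠ 0, a 2 ≠ 0
        refine ⟨![0, a 1, -a 2], fun hw => h1 (by simpa using congrFun hw 1), fun b => ?_⟩
        constructor
        · intro h
          have e0 : a 1 * b 2 + a 2 * b 1 = 0 := congrFun h 0
          have e1 : a 0 * b 2 + a 2 * b 0 = 0 := congrFun h 1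
          rw [h0, zero_mul, zero_add] at e1
          have hb0 : b 0 = 0 := (mul_eq_zero.mp e1).resolve_left h2
          refine ⟨b 1 / a 1, vec_ext ?_ ?_ ?_⟩ <;>
            simp only [Pi.smul_apply, smul_eq_mul, Matrix.cons_val_zero, Matrix.cons_val_one,
              Matrix.head_cons, Matrix.cons_val_two, Matrix.tail_cons]
          · simp [hb0]
          · field_simp
          · field_simp; linear_combination -e0
        · rintro ⟨c, rfl⟩
          refine vec_ext ?_ ?_ ?_ <;> simp [pcr, h0] <;> ring
  · by_cases h1 : a 1 = 0
    · by_cases h2 : a 2 = 0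
      · -- a 1 = 0, a 2 = 0, a 0 ≠ 0
        refine ⟨![1, 0, 0], fun hw => one_ne_zero (α := F) (congrFun hw 0), fun b => ?_⟩
        constructor
        · intro h
          have e1 : a 0 * b 2 + a 2 * b 0 = 0 := congrFun h 1
          have e2 : a 0 * b 1 + a 1 * b 0 = 0 := congrFun h 2
          rw [h2, zero_mul, add_zero] at e1
          rw [h1, zero_mul, add_zero] at e2
          have hb2 : b 2 = 0 := (mul_eq_zero.mp e1).resolve_left h0
          have hb1 : b 1 = 0 := (mul_eq_zero.mp e2).resolve_left h0
          exact ⟨b 0, vec_ext (by simp) (by simpa using hb1.symm) (by simpa using hb2.symm)⟩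
        · rintro ⟨c, rfl⟩
          refine vec_ext ?_ ?_ ?_ <;> simp [pcr, h1, h2]
      · -- a 0 ≠ 0, a 1 = 0, a 2 ≠ 0
        refine ⟨![a 0, 0, -a 2], fun hw => h0 (by simpa using congrFun hw 0), fun b => ?_⟩
        constructor
        · intro h
          have e0 : a 1 * b 2 + a 2 * b 1 = 0 := congrFun h 0
          have e1 : a 0 * b 2 + a 2 * b 0 = 0 := congrFun h 1
          rw [h1, zero_mul, zero_add] at e0
          have hb1 : b 1 = 0 := (mul_eq_zero.mp e0).resolve_left h2
          refine ⟨b 0 / a 0, vec_ext ?_ ?_ ?_⟩ <;>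
            simp only [Pi.smul_apply, smul_eq_mul, Matrix.cons_val_zero, Matrix.cons_val_one,
              Matrix.head_cons, Matrix.cons_val_two, Matrix.tail_cons]
          · field_simp
          · simp [hb1]
          · field_simp; linear_combination -e1
        · rintro ⟨c, rfl⟩
          refine vec_ext ?_ ?_ ?_ <;> simp [pcr, h1] <;> ring
    · -- a 0 ≠ 0, a 1 ≠ 0, a 2 = 0
      have h2 : a 2 = 0 := by
        rcases hz with ⟨i, hi⟩
        fin_cases i
        · exact absurd hi h0
        · exact absurd hi h1
        · exact hi
      refine ⟨![a 0, -a 1, 0], fun hw => h0 (by simpa using congrFun hw 0), fun b => ?_⟩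
      constructor
      · intro h
        have e0 : a 1 * b 2 + a 2 * b 1 = 0 := congrFun h 0
        have e2 : a 0 * b 1 + a 1 * b 0 = 0 := congrFun h 2
        rw [h2, zero_mul, add_zero] at e0
        have hb2 : b 2 = 0 := (mul_eq_zero.mp e0).resolve_left h1
        refine ⟨b 0 / a 0, vec_ext ?_ ?_ ?_⟩ <;>
          simp only [Pi.smul_apply, smul_eq_mul, Matrix.cons_val_zero, Matrix.cons_val_one,
            Matrix.head_cons, Matrix.cons_val_two, Matrix.tail_cons]
        · field_simp
        · field_simp; linear_combination -e2
        · simp [hb2]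
      · rintro ⟨c, rfl⟩
        refine vec_ext ?_ ?_ ?_ <;> simp [pcr, h2] <;> ring

end Field

section Counting
variable {F : Type} [Field F] [Fintype F] [DecidableEq F]

lemma card_filter_prod {α β : Type*} [Fintype α] [Fintype β] [DecidableEq α] [DecidableEq β]
    (P : α → β → Prop) [∀ a b, Decidable (P a b)] :
    (Finset.univ.filter fun p : α × β => P p.1 p.2).card
      = ∑ a : α, (Finset.univ.filter fun b : β => P a b).card := by
  rw [Finset.card_filter]
  rw [← Finset.univ_product_univ, Finset.sum_product]
  exact Finset.sum_congr rfl fun a _ => (Finset.card_filter _ _).symm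

lemma card_dot_zero (v : Fin 3 → F) (hv : v ≠ 0) :
    Fintype.card {c : Fin 3 → F // c ⬝ᵥ v = 0} = Fintype.card F ^ 2 := by
  classical
  let f : (Fin 3 → F) →ₗ[F] F :=
    v 0 • LinearMap.proj 0 + v 1 • LinearMap.proj 1 + v 2 • LinearMap.proj 2
  have hf : ∀ c, f c = c ⬝ᵥ v := by
    intro c
    simp [f, dotProduct, Fin.sum_univ_three, mul_comm]
  have hsurj : Function.Surjective f := by
    obtain ⟨j, hj⟩ : ∃ j, v j ≠ 0 := by
      by_contra h
      push_neg at h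
      exact hv (funext fun i => h i)
    intro y
    refine ⟨Pi.single j (y * (v j)⁻¹), ?_⟩
    rw [hf, dotProduct]
    rw [Finset.sum_eq_single j]
    · simp [hj]
    · intro b _ hb; simp [Pi.single_apply, hb]
    · simp
  have hcard := Submodule.card_eq_card_quotient_mul_card (LinearMap.ker f)
  have hquot : Nat.card ((Fin 3 → F) ⧸ LinearMap.ker f) = Fintype.card F := by
    rw [Nat.card_congr (f.quotKerEquivRange).toEquiv]
    rw [LinearMap.range_eq_top.2 hsurj]
    rw [Nat.card_congr (Submodule.topEquiv.toEquiv)]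
    simp [Nat.card_eq_fintype_card]
  have hdom : Nat.card (Fin 3 → F) = Fintype.card F ^ 3 := by
    simp [Nat.card_eq_fintype_card]
  have hker : Fintype.card {c : Fin 3 → F // c ⬝ᵥ v = 0}
      = Nat.card (LinearMap.ker f) := by
    rw [Nat.card_eq_fintype_card]
    apply Fintype.card_congr
    exact Equiv.subtypeEquivRight fun c => by simp [LinearMap.mem_ker, hf]
  rw [hker]
  have hq : 0 < Fintype.card F := Fintype.card_pos
  rw [hquot, hdom] at hcard
  have h3 : Fintype.card F ^ 3 = Fintype.card F ^ 2 * Fintype.card F := by ring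
  rw [h3] at hcard
  exact Nat.eq_of_mul_eq_mul_right hq hcard.symm

omit [DecidableEq F] in
lemma card_line (w : Fin 3 → F) (hw : w ≠ 0) (p : (Fin 3 → F) → Prop) [DecidablePred p]
    (h : ∀ b, p b ↔ ∃ c : F, c • w = b) :
    Fintype.card {b : Fin 3 → F // p b} = Fintype.card F := by
  symm
  apply Fintype.card_congr
  refine Equiv.ofBijective (fun c => ⟨c • w, (h _).2 ⟨c, rfl⟩⟩) ⟨?_, ?_⟩
  · intro c₁ c₂ hc
    exact smul_left_injective F hw (congrArg Subtype.val hc)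
  · rintro ⟨b, hb⟩
    obtain ⟨c, hc⟩ := (h b).1 hb
    exact ⟨c, Subtype.ext hc⟩

lemma card_allnz :
    (Finset.univ.filter fun a : Fin 3 → F => ∀ i, a i ≠ 0).card
      = (Fintype.card F - 1) ^ 3 := by
  rw [← Fintype.card_subtype]
  rw [Fintype.card_congr (Equiv.subtypePiEquivPi (p := fun _ (x : F) => x ≠ 0))]
  rw [Fintype.card_pi]
  have h : Fintype.card {x : F // x ≠ 0} = Fintype.card F - 1 := by
    simp [Fintype.card_subtype_compl]
  simp [h]

lemma card_pcr_fiber (h2 : (2 : F) ≠ 0) (a : Fin 3 → F) :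
    (Finset.univ.filter fun b : Fin 3 → F => pcr a b = 0).card
      = if a = 0 then Fintype.card F ^ 3
        else if ∀ i, a i ≠ 0 then 1 else Fintype.card F := by
  rw [← Fintype.card_subtype]
  split_ifs with ha hall
  · subst ha
    rw [Fintype.card_congr (Equiv.subtypeUnivEquiv fun b => pcr_zero b)]
    simp [Fintype.card_fun]
  · rw [Fintype.card_congr (Equiv.subtypeEquivRight fun b => pcr_all_ne h2 a hall b)]
    exact Fintype.card_subtype_eq 0
  · push_neg at hall
    obtain ⟨i, hi⟩ := hall
    obtain ⟨w, hw, hiff⟩ := pcr_line a ha ⟨i, hi⟩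
    exact card_line w hw _ hiff

lemma card_dcr_fiber (a : Fin 3 → F) :
    (Finset.univ.filter fun b : Fin 3 → F => dcr a b = 0).card
      = if a = 0 then Fintype.card F ^ 3
        else if ∀ i, a i ≠ 0 then Fintype.card F else Fintype.card F := by
  rw [← Fintype.card_subtype]
  by_cases ha : a = 0
  · subst ha
    rw [if_pos rfl]
    rw [Fintype.card_congr (Equiv.subtypeUnivEquiv fun b => dcr_zero b)]
    simp [Fintype.card_fun]
  · rw [if_neg ha, ite_self]
    exact card_line a ha _ (dcr_line a ha)

def rowsEquiv : Matrix (Fin 3) (Fin 3) F ≃ ((Fin 3 → F) × (Fin 3 → F)) × (Fin 3 → F) where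
  toFun A := ((A 0, A 1), A 2)
  invFun p := Matrix.of ![p.1.1, p.1.2, p.2]
  left_inv A := by
    ext i j
    fin_cases i <;> rfl
  right_inv p := rfl

lemma card_matrix_zero (g : (Fin 3 → F) → (Fin 3 → F) → (Fin 3 → F))
    (φ : Matrix (Fin 3) (Fin 3) F → F)
    (hφ : ∀ A, φ A = A 2 ⬝ᵥ g (A 0) (A 1)) :
    Fintype.card {A : Matrix (Fin 3) (Fin 3) F // φ A = 0}
      = (Finset.univ.filter fun p : (Fin 3 → F) × (Fin 3 → F) => g p.1 p.2 = 0).card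
          * Fintype.card F ^ 3
        + (Finset.univ.filter fun p : (Fin 3 → F) × (Fin 3 → F) => ¬ g p.1 p.2 = 0).card
          * Fintype.card F ^ 2 := by
  have e : {A : Matrix (Fin 3) (Fin 3) F // φ A = 0}
      ≃ {p : ((Fin 3 → F) × (Fin 3 → F)) × (Fin 3 → F) // p.2 ⬝ᵥ g p.1.1 p.1.2 = 0} :=
    (rowsEquiv (F := F)).subtypeEquiv fun A => by rw [hφ]; rfl
  rw [Fintype.card_congr e, Fintype.card_subtype]
  rw [card_filter_prod (fun (ab : (Fin 3 → F) × (Fin 3 → F)) (c : Fin 3 → F) =>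
    c ⬝ᵥ g ab.1 ab.2 = 0)]
  have key : ∀ ab : (Fin 3 → F) × (Fin 3 → F),
      (Finset.univ.filter fun c : Fin 3 → F => c ⬝ᵥ g ab.1 ab.2 = 0).card
        = if g ab.1 ab.2 = 0 then Fintype.card F ^ 3 else Fintype.card F ^ 2 := by
    intro ab
    split_ifs with hz
    · rw [hz]
      simp only [dotProduct_zero]
      simp [Fintype.card_fun]
    · rw [← Fintype.card_subtype]
      exact card_dot_zero _ hz
  rw [Finset.sum_congr rfl fun ab _ => key ab]
  rw [Finset.sum_ite, Finset.sum_const, Finset.sum_const, smul_eq_mul, smul_eq_mul]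

lemma sum_three_split (f : (Fin 3 → F) → ℕ) (c₀ c₁ c₂ : ℕ)
    (hf : ∀ a, f a = if a = 0 then c₀ else if ∀ i, a i ≠ 0 then c₁ else c₂) :
    ∑ a : Fin 3 → F, f a
      = c₀ + (Finset.univ.filter fun a : Fin 3 → F => ∀ i, a i ≠ 0).card * c₁
        + ((Finset.univ.filter fun a : Fin 3 → F => ¬ a = 0).filter
            fun a => ¬ ∀ i, a i ≠ 0).card * c₂ := by
  rw [Finset.sum_congr rfl fun a _ => hf a]
  rw [Finset.sum_ite, Finset.sum_ite, Finset.sum_const, Finset.sum_const, Finset.sum_const,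
    smul_eq_mul, smul_eq_mul, smul_eq_mul]
  have h1 : (Finset.univ.filter fun a : Fin 3 → F => a = 0).card = 1 := by
    rw [Finset.filter_eq']
    simp
  have h2 : ((Finset.univ.filter fun a : Fin 3 → F => ¬ a = 0).filter
      fun a => ∀ i, a i ≠ 0) = Finset.univ.filter fun a : Fin 3 → F => ∀ i, a i ≠ 0 := by
    rw [Finset.filter_filter]
    apply Finset.filter_congr
    intro a _
    constructor
    · exact fun h => h.2
    · intro h
      refine ⟨fun h0 => h 0 ?_, h⟩
      rw [h0]
      rfl
  rw [h1, h2, one_mul]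
  ring

end Counting
end PerDetAux

/-- For every finite field `F` with `char F ≠ 2`, no bijective map
`Φ : M₃(F) → M₃(F)` satisfies `per A = det (Φ A)` for all `A`. -/
theorem no_bijective_permanent_to_determinant_converter_three
    (F : Type) [Field F] [Fintype F] (hch : ringChar F ≠ 2) :
    ¬ ∃ Φ : Matrix (Fin 3) (Fin 3) F → Matrix (Fin 3) (Fin 3) F,
        Function.Bijective Φ ∧ ∀ A, A.permanent = (Φ A).det := by
  classical
  rintro ⟨Φ, hbij, hper⟩
  have h2 : (2 : F) ≠ 0 := Ring.two_ne_zero hch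
  set q := Fintype.card F with hqdef
  have hq2 : 1 < q := Fintype.one_lt_card
  -- the two zero-fibers have the same cardinality
  have hcards : Fintype.card {A : Matrix (Fin 3) (Fin 3) F // A.permanent = 0}
      = Fintype.card {A : Matrix (Fin 3) (Fin 3) F // A.det = 0} := by
    apply Fintype.card_congr
    refine Equiv.ofBijective (fun A => ⟨Φ A.1, by rw [← hper]; exact A.2⟩) ⟨?_, ?_⟩
    · intro A B h
      exact Subtype.ext (hbij.1 (congrArg Subtype.val h))
    · rintro ⟨B, hB⟩
      obtain ⟨A, rfl⟩ := hbij.2 B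
      exact ⟨⟨A, by rw [hper]; exact hB⟩, rfl⟩
  -- notation for the pair counts
  set NPp := (Finset.univ.filter
    fun p : (Fin 3 → F) × (Fin 3 → F) => PerDetAux.pcr p.1 p.2 = 0).card with hNPpdef
  set NPn := (Finset.univ.filter
    fun p : (Fin 3 → F) × (Fin 3 → F) => ¬ PerDetAux.pcr p.1 p.2 = 0).card with hNPndef
  set NDp := (Finset.univ.filter
    fun p : (Fin 3 → F) × (Fin 3 → F) => PerDetAux.dcr p.1 p.2 = 0).card with hNDpdef
  set NDn := (Finset.univ.filter
    fun p : (Fin 3 → F) × (Fin 3 → F) => ¬ PerDetAux.dcr p.1 p.2 = 0).card with hNDndef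
  have hP := PerDetAux.card_matrix_zero (F := F) PerDetAux.pcr Matrix.permanent
    PerDetAux.permanent_eq_dot
  have hD := PerDetAux.card_matrix_zero (F := F) PerDetAux.dcr Matrix.det
    PerDetAux.det_eq_dot
  rw [← hNPpdef, ← hNPndef] at hP
  rw [← hNDpdef, ← hNDndef] at hD
  -- `n` is the number of nonzero vectors with a zero coordinate
  set n := ((Finset.univ.filter fun a : Fin 3 → F => ¬ a = 0).filter
      fun a => ¬ ∀ i, a i ≠ 0).card with hn
  set d := q - 1 with hddef
  have hqpos : 0 < q := Nat.lt_trans Nat.zero_lt_one hq2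
  have hd : q = d + 1 := by
    rw [hddef]
    exact (Nat.succ_pred_eq_of_pos hqpos).symm
  -- evaluate NPp
  have hNPp : NPp = q ^ 3 + d ^ 3 * 1 + n * q := by
    rw [hNPpdef, PerDetAux.card_filter_prod (fun a b : Fin 3 → F => PerDetAux.pcr a b = 0)]
    rw [PerDetAux.sum_three_split _ (q ^ 3) 1 q (PerDetAux.card_pcr_fiber h2)]
    rw [PerDetAux.card_allnz]
  have hNDp : NDp = q ^ 3 + d ^ 3 * q + n * q := by
    rw [hNDpdef, PerDetAux.card_filter_prod (fun a b : Fin 3 → F => PerDetAux.dcr a b = 0)]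
    rw [PerDetAux.sum_three_split _ (q ^ 3) q q (PerDetAux.card_dcr_fiber)]
    rw [PerDetAux.card_allnz]
  -- the two partitions of pairs
  have hpartP : NPp + NPn = q ^ 3 * q ^ 3 := by
    rw [hNPpdef, hNPndef, Finset.card_filter_add_card_filter_not, Finset.card_univ]
    simp [hqdef]
  have hpartD : NDp + NDn = q ^ 3 * q ^ 3 := by
    rw [hNDpdef, hNDndef, Finset.card_filter_add_card_filter_not, Finset.card_univ]
    simp [hqdef]
  -- key relations
  have hX : NDp = NPp + d ^ 3 * d := by
    rw [hNPp, hNDp, hd]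
    ring
  have hK : NPn = NDn + d ^ 3 * d := by
    have h12 : NPp + NPn = NDp + NDn := hpartP.trans hpartD.symm
    rw [hX] at h12
    have h13 : NPp + NPn = NPp + (NDn + d ^ 3 * d) := by
      rw [h12]; ring
    exact Nat.add_left_cancel h13
  rw [hP, hD, hK, hX] at hcards
  have e1 : NPp * q ^ 3 + (NDn + d ^ 3 * d) * q ^ 2
      = (NPp * q ^ 3 + NDn * q ^ 2) + (d ^ 3 * d) * q ^ 2 := by ring
  have e2 : (NPp + d ^ 3 * d) * q ^ 3 + NDn * q ^ 2
      = (NPp * q ^ 3 + NDn * q ^ 2) + (d ^ 3 * d) * q ^ 3 := by ring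
  rw [e1, e2] at hcards
  have e3 : (d ^ 3 * d) * q ^ 2 = (d ^ 3 * d) * q ^ 3 := Nat.add_left_cancel hcards
  have hdpos : 0 < d := hddef ▸ Nat.sub_pos_of_lt hq2
  have hXpos : 0 < d ^ 3 * d := Nat.mul_pos (Nat.pow_pos hdpos) hdpos
  have e4 : q ^ 2 = q ^ 3 := Nat.eq_of_mul_eq_mul_left hXpos e3
  have hlt : q ^ 2 < q ^ 3 := Nat.pow_lt_pow_right hq2 (by norm_num)
  exact absurd e4 (Nat.ne_of_lt hlt)
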